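/- If X₁, …, X_n are independent and at least one X_i is heavy-tailed while the others are symmetric continuous random variables with densities, then any linear combination Σ c_i X_i with the heavy-tailed coefficient c_i ≠ 0 is heavy-tailed. -/

import Mathlib

open MeasureTheory ProbabilityTheory Real
open scoped ENNReal NNReal

/-- A real random variable `X` on `(Ω, μ)` is heavy-tailed if `E[e^{t|X|}] = ∞` for all `t > 0`. -/
def HeavyTailed {Ω : Type*} [MeasurableSpace Ω] (μ : Measure Ω) (X : Ω → ℝ) : Prop :=
  ∀ t : ℝ, 0 < t → ∫⁻ ω, ENNReal.ofReal (Real.exp (t * |X ω|)) ∂μ = ⊤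

lemma map_add_of_indepFun {Ω : Type*} [MeasurableSpace Ω] (μ : Measure Ω) [IsProbabilityMeasure μ]
    {A B : Ω → ℝ} (hA : Measurable A) (hB : Measurable B) (h : IndepFun A B μ) :
    Measure.map (fun ω => A ω + B ω) μ
      = Measure.map (fun p : ℝ × ℝ => p.1 + p.2) ((Measure.map A μ).prod (Measure.map B μ)) := by
  rw [← (indepFun_iff_map_prod_eq_prod_map_map hA.aemeasurable hB.aemeasurable).mp h,
    Measure.map_map measurable_add (hA.prodMk hB)]
  rfl

-- sum of two independent symmetric is symmetric
lemma map_neg_add_of_symm {Ω : Type*} [MeasurableSpace Ω] (μ : Measure Ω) [IsProbabilityMeasure μ]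
    {A B : Ω → ℝ} (hA : Measurable A) (hB : Measurable B) (h : IndepFun A B μ)
    (hAs : Measure.map A μ = Measure.map (fun ω => -(A ω)) μ)
    (hBs : Measure.map B μ = Measure.map (fun ω => -(B ω)) μ) :
    Measure.map (fun ω => A ω + B ω) μ = Measure.map (fun ω => -(A ω + B ω)) μ := by
  have hind' : IndepFun (fun ω => -(A ω)) (fun ω => -(B ω)) μ := h.comp measurable_neg measurable_neg
  have h2 : (fun ω => -(A ω + B ω)) = fun ω => (-(A ω)) + (-(B ω)) := by funext ω; ring
  rw [h2, map_add_of_indepFun μ hA hB h, map_add_of_indepFun μ (A := fun ω => -(A ω)) (B := fun ω => -(B ω)) hA.neg hB.neg hind', ← hAs, ← hBs]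


lemma heavyTailed_const_mul {Ω : Type*} [MeasurableSpace Ω] {μ : Measure Ω}
    {X : Ω → ℝ} (hh : HeavyTailed μ X) {c : ℝ} (hc : c ≠ 0) :
    HeavyTailed μ (fun ω => c * X ω) := by
  intro t ht
  have hc' : 0 < |c| := abs_pos.mpr hc
  have := hh (t * |c|) (mul_pos ht hc')
  rw [← this]
  congr 1
  funext ω
  rw [abs_mul]
  ring_nf

lemma heavyTailed_add_indep_symm {Ω : Type*} [MeasurableSpace Ω] (μ : Measure Ω)
    [IsProbabilityMeasure μ] {Y Z : Ω → ℝ} (hY : Measurable Y) (hZ : Measurable Z)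
    (hind : IndepFun Y Z μ) (hZs : Measure.map Z μ = Measure.map (fun ω => -(Z ω)) μ)
    (hh : HeavyTailed μ Y) : HeavyTailed μ (fun ω => Y ω + Z ω) := by
  intro t ht
  set F : ℝ → ℝ≥0∞ := fun y => ENNReal.ofReal (Real.exp (t * |y|)) with hF
  have hFm : Measurable F := by
    apply ENNReal.measurable_ofReal.comp
    exact Real.measurable_exp.comp ((measurable_id.abs).const_mul t)
  set ν₁ := Measure.map Y μ with hν₁
  set ν₂ := Measure.map Z μ with hν₂
  haveI : IsProbabilityMeasure ν₁ := Measure.isProbabilityMeasure_map hY.aemeasurable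
  haveI : IsProbabilityMeasure ν₂ := Measure.isProbabilityMeasure_map hZ.aemeasurable
  show ∫⁻ ω, F (Y ω + Z ω) ∂μ = ⊤
  have hnegν₂ : Measure.map Neg.neg ν₂ = ν₂ := by
    rw [hν₂, Measure.map_map measurable_neg hZ]
    exact (show Measure.map (fun ω => -(Z ω)) μ = ν₂ from hZs.symm)
  -- joint law
  have hjoint : Measure.map (fun ω => (Y ω, Z ω)) μ = ν₁.prod ν₂ :=
    (indepFun_iff_map_prod_eq_prod_map_map hY.aemeasurable hZ.aemeasurable).mp hind
  -- inner symmetry: for each y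
  have hinner_symm : ∀ y : ℝ, ∫⁻ z, F (y - z) ∂ν₂ = ∫⁻ z, F (y + z) ∂ν₂ := by
    intro y
    have hm : Measurable fun z : ℝ => F (y - z) := hFm.comp (measurable_const.sub measurable_id)
    conv_lhs => rw [← hnegν₂]
    rw [lintegral_map hm measurable_neg]
    simp [sub_neg_eq_add]
  -- pointwise bound
  have hpt : ∀ y z : ℝ, ENNReal.ofReal (Real.exp (t * |y|)) ≤ F (y + z) + F (y - z) := by
    intro y z
    have habs : 2 * |y| ≤ |y + z| + |y - z| := by
      have h1 : |(y + z) + (y - z)| ≤ |y + z| + |y - z| := abs_add_le _ _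
      have h2 : (y + z) + (y - z) = 2 * y := by ring
      rw [h2, abs_mul] at h1
      simpa using h1
    rcases le_or_gt (|y|) (|y + z|) with h | h
    · refine le_trans ?_ (le_add_right le_rfl)
      exact ENNReal.ofReal_le_ofReal (Real.exp_le_exp.mpr (by nlinarith))
    · have h' : |y| ≤ |y - z| := by nlinarith [abs_nonneg (y+z), abs_nonneg (y-z), abs_nonneg y]
      refine le_trans ?_ (le_add_left le_rfl)
      exact ENNReal.ofReal_le_ofReal (Real.exp_le_exp.mpr (by nlinarith))
  -- inner lower bound
  have hinner : ∀ y : ℝ, ENNReal.ofReal (Real.exp (t * |y|)) ≤ 2 * ∫⁻ z, F (y + z) ∂ν₂ := by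
    intro y
    have hm1 : Measurable fun z => F (y + z) := hFm.comp (measurable_const.add measurable_id)
    calc ENNReal.ofReal (Real.exp (t * |y|))
        = ∫⁻ _, ENNReal.ofReal (Real.exp (t * |y|)) ∂ν₂ := by simp
      _ ≤ ∫⁻ z, (F (y + z) + F (y - z)) ∂ν₂ := lintegral_mono fun z => hpt y z
      _ = (∫⁻ z, F (y + z) ∂ν₂) + ∫⁻ z, F (y - z) ∂ν₂ := lintegral_add_left hm1 _
      _ = 2 * ∫⁻ z, F (y + z) ∂ν₂ := by rw [hinner_symm y, two_mul]
  -- main computation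
  have hmeas_pair : Measurable fun p : ℝ × ℝ => F (p.1 + p.2) := hFm.comp measurable_add
  have hmain : ∫⁻ ω, F (Y ω + Z ω) ∂μ = ∫⁻ y, ∫⁻ z, F (y + z) ∂ν₂ ∂ν₁ := by
    rw [← lintegral_prod _ hmeas_pair.aemeasurable, ← hjoint,
      lintegral_map hmeas_pair (hY.prodMk hZ)]
  have hY_top : ∫⁻ y, ENNReal.ofReal (Real.exp (t * |y|)) ∂ν₁ = ⊤ := by
    rw [hν₁, lintegral_map hFm hY]
    exact hh t ht
  have hle : (⊤ : ℝ≥0∞) ≤ 2 * ∫⁻ ω, F (Y ω + Z ω) ∂μ := by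
    have hunc : Measurable (Function.uncurry fun y z : ℝ => F (y + z)) := hmeas_pair
    rw [hmain, ← lintegral_const_mul 2 hunc.lintegral_prod_right]
    rw [← hY_top]
    exact lintegral_mono hinner
  have h2 : 2 * ∫⁻ ω, F (Y ω + Z ω) ∂μ = ⊤ := top_le_iff.mp hle
  rcases ENNReal.mul_eq_top.mp h2 with ⟨-, h⟩ | ⟨h, -⟩
  · exact h
  · exact absurd h (by norm_num)

/-- If `X₁, …, X_n` are independent, `X_{i₀}` is heavy-tailed and the other `X_i` are symmetric
continuous random variables (with densities), then `∑ i, c_i X_i` with `c_{i₀} ≠ 0` is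
heavy-tailed. -/
theorem heavyTailed_linear_combination
    {Ω : Type*} [MeasurableSpace Ω] (μ : Measure Ω) [IsProbabilityMeasure μ]
    (n : ℕ) (X : Fin n → Ω → ℝ) (hX : ∀ i, Measurable (X i))
    (hindep : iIndepFun X μ)
    (i₀ : Fin n) (hheavy : HeavyTailed μ (X i₀))
    (hsymm : ∀ i, i ≠ i₀ → Measure.map (X i) μ = Measure.map (fun ω => -(X i ω)) μ)
    (f : Fin n → ℝ → ℝ≥0∞) (hf : ∀ i, i ≠ i₀ → Measurable (f i))
    (hdens : ∀ i, i ≠ i₀ → Measure.map (X i) μ = volume.withDensity (f i))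
    (c : Fin n → ℝ) (hc : c i₀ ≠ 0) :
    HeavyTailed μ (fun ω => ∑ i, c i * X i ω) := by
  classical
  set g : Fin n → Ω → ℝ := fun i ω => c i * X i ω with hg
  have hgmeas : ∀ i, Measurable (g i) := fun i => (hX i).const_mul _
  have hgindep : iIndepFun g μ :=
    hindep.comp (fun i x => c i * x) (fun i => measurable_const_mul _)
  have hgsymm : ∀ i, i ≠ i₀ → Measure.map (g i) μ = Measure.map (fun ω => -(g i ω)) μ := by
    intro i hi
    have h2 : (fun ω => -(g i ω)) = (fun x => c i * x) ∘ (fun ω => -(X i ω)) := by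
      funext ω; exact (mul_neg _ _).symm
    have h1 : g i = (fun x => c i * x) ∘ X i := rfl
    rw [h2, h1, ← Measure.map_map (measurable_const_mul _) (hX i),
      ← Measure.map_map (f := fun ω => -(X i ω)) (measurable_const_mul _) (hX i).neg, hsymm i hi]
  -- symmetry of partial sums avoiding i₀
  have hsum_symm : ∀ s : Finset (Fin n), i₀ ∉ s →
      Measure.map (fun ω => ∑ i ∈ s, g i ω) μ
        = Measure.map (fun ω => -(∑ i ∈ s, g i ω)) μ := by
    intro s
    induction s using Finset.induction_on with
    | empty => simp
    | insert j s' hj ih =>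
      intro hmem
      have hji₀ : i₀ ∉ s' := fun h => hmem (Finset.mem_insert_of_mem h)
      have hS : Measurable fun ω => ∑ i ∈ s', g i ω :=
        Finset.measurable_sum s' (fun i _ => hgmeas i)
      have hjne : j ≠ i₀ := fun h => hmem (h ▸ Finset.mem_insert_self j s')
      have hsum_eq : (∑ i ∈ s', g i) = fun ω => ∑ i ∈ s', g i ω := by
        funext ω; simp [Finset.sum_apply]
      have hind : IndepFun (g j) (fun ω => ∑ i ∈ s', g i ω) μ := by
        have := (hgindep.indepFun_finsetSum_of_notMem hgmeas hj).symm
        rwa [hsum_eq] at this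
      have hstep := map_neg_add_of_symm μ (hgmeas j) hS hind (hgsymm j hjne) (ih hji₀)
      have e1 : (fun ω => ∑ i ∈ insert j s', g i ω) = fun ω => g j ω + ∑ i ∈ s', g i ω := by
        funext ω; rw [Finset.sum_insert hj]
      have e2 : (fun ω => -(∑ i ∈ insert j s', g i ω))
          = fun ω => -(g j ω + ∑ i ∈ s', g i ω) := by
        funext ω; rw [Finset.sum_insert hj]
      rw [e1, e2]
      exact hstep
  -- split the total sum
  have hsplit : (fun ω => ∑ i, c i * X i ω)
      = fun ω => g i₀ ω + ∑ i ∈ Finset.univ.erase i₀, g i ω := by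
    funext ω
    exact (Finset.add_sum_erase Finset.univ (fun i => g i ω) (Finset.mem_univ i₀)).symm
  rw [hsplit]
  have hZmeas : Measurable fun ω => ∑ i ∈ Finset.univ.erase i₀, g i ω :=
    Finset.measurable_sum _ (fun i _ => hgmeas i)
  have hsum_eq : (∑ i ∈ Finset.univ.erase i₀, g i)
      = fun ω => ∑ i ∈ Finset.univ.erase i₀, g i ω := by
    funext ω; simp [Finset.sum_apply]
  have hind : IndepFun (g i₀) (fun ω => ∑ i ∈ Finset.univ.erase i₀, g i ω) μ := by
    have := (hgindep.indepFun_finsetSum_of_notMem hgmeas (Finset.notMem_erase i₀ Finset.univ)).symm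
    rwa [hsum_eq] at this
  exact heavyTailed_add_indep_symm μ (hgmeas i₀) hZmeas hind
    (hsum_symm _ (Finset.notMem_erase i₀ _)) (heavyTailed_const_mul hheavy hc)
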